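/- For any reals $x, \delta$ and $p \geq 2$, we have $\frac{p}{8}|x|^{p-2}\delta^2 + \frac{1}{2^{p+1}}|\delta|^p \leq |x+\delta|^p - |x|^p - p|x|^{p-2}x\,\delta \leq 2p^2 |x|^{p-2}\delta^2 + p^p |\delta|^p$. -/

import Mathlib

open Real

lemma sq_rpow_half (a p : ℝ) : (a^2) ^ (p/2) = |a| ^ p := by
  rw [← sq_abs, ← Real.rpow_natCast |a| 2, ← Real.rpow_mul (abs_nonneg a)]
  congr 1; push_cast; ring

lemma scalarL1 (p t : ℝ) (hp : 2 ≤ p) : 1 + p*t + p/2*t^2 ≤ |1+t| ^ p := by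
  have h0 : (-1:ℝ) ≤ 2*t + t^2 := by nlinarith [sq_nonneg (1+t)]
  have hb := one_add_mul_self_le_rpow_one_add h0 (p := p/2) (by linarith)
  have he : (1:ℝ) + (2*t+t^2) = (1+t)^2 := by ring
  rw [he, sq_rpow_half] at hb
  linarith

lemma scalarL2 (p t : ℝ) (hp : 2 ≤ p) : |t|^p / 2^p ≤ |1+t|^p - 1 - p*t := by
  have hL1 := scalarL1 p t hp
  have h2p : (0:ℝ) < 2^p := Real.rpow_pos_of_pos (by norm_num) p
  have h24 : (4:ℝ) ≤ 2^p := by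
    calc (4:ℝ) = 2^(2:ℝ) := by norm_num
      _ ≤ 2^p := Real.rpow_le_rpow_of_exponent_le (by norm_num) hp
  rcases le_or_gt |t| 2 with h | h
  · have ht4 : |t|^p/2^p = (|t|/2)^p := (Real.div_rpow (abs_nonneg t) (by norm_num) p).symm
    rcases eq_or_ne t 0 with rfl | ht0
    · simp [Real.zero_rpow (show p ≠ 0 by linarith)]
    · have hb0 : 0 < |t|/2 := by have := abs_pos.mpr ht0; linarith
      have hb1 : |t|/2 ≤ 1 := by linarith
      have hkey := Real.rpow_le_rpow_of_exponent_ge hb0 hb1 hp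
      have h2 : (|t|/2)^(2:ℝ) = t^2/4 := by
        rw [show (2:ℝ) = ((2:ℕ):ℝ) by norm_num, Real.rpow_natCast, div_pow, sq_abs]
        norm_num
      rw [ht4]
      nlinarith [hkey, sq_nonneg t]
  · rcases lt_abs.mp h with ht | ht
    · -- 2 < t
      have ha1 : |1+t| = 1+t := abs_of_nonneg (by linarith)
      have ha2 : |t| = t := abs_of_nonneg (by linarith)
      have hmono : t^p ≤ (1+t)^p := Real.rpow_le_rpow (by linarith) (by linarith) (by linarith)
      have hkey : t^p/2^p ≤ t^p/4 :=
        div_le_div_of_nonneg_left (Real.rpow_nonneg (by linarith) p) (by norm_num) h24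
      rw [ha1] at hL1 ⊢
      rw [ha2]
      have haux : 1 + p*t ≤ (3/2)*p*t^2 := by
        nlinarith [mul_nonneg (mul_nonneg (show (0:ℝ) ≤ p by linarith) (show (0:ℝ) ≤ t by linarith)) (show (0:ℝ) ≤ t - 2 by linarith), mul_nonneg (show (0:ℝ) ≤ p - 2 by linarith) (show (0:ℝ) ≤ t - 2 by linarith)]
      linarith [hkey, hL1, hmono, haux]
    · -- 2 < -t
      have ha1 : |1+t| = -(1+t) := abs_of_nonpos (by linarith)
      have ha2 : |t| = -t := abs_of_neg (by linarith)
      have hmono : (-t/2)^p ≤ (-(1+t))^p := Real.rpow_le_rpow (by linarith) (by linarith) (by linarith)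
      have hdiv : (-t)^p/2^p = (-t/2)^p := (Real.div_rpow (by linarith) (by norm_num) p).symm
      rw [ha1, ha2]
      have hpt : -1 - p*t ≥ 0 := by nlinarith
      rw [hdiv]
      linarith [hmono]


lemma expaux (v : ℝ) (hv0 : 0 ≤ v) (hv1 : v ≤ 1) : exp v ≤ 1 + 3*v := by
  have ha : 1 - v ≤ exp (-v) := by linarith [Real.add_one_le_exp (-v)]
  have hb : (1-v) * exp v ≤ 1 := by
    have h := mul_le_mul_of_nonneg_right ha (le_of_lt (Real.exp_pos v))
    rwa [← Real.exp_add, neg_add_cancel, Real.exp_zero] at h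
  have hc : exp v ≤ exp 1 := Real.exp_le_exp.mpr hv1
  have he : exp 1 < 3 := lt_trans Real.exp_one_lt_d9 (by norm_num)
  nlinarith [Real.exp_pos v, mul_le_mul_of_nonneg_left (le_of_lt (lt_of_le_of_lt hc he)) hv0]

lemma lemK (p : ℝ) (hp : 2 ≤ p) (t : ℝ) (ht0 : 0 ≤ t) (ht1 : t*(p-1) ≤ 1) :
    (1+t)^p ≤ 1 + p*t + 2*p^2*t^2 := by
  have hp1 : (1:ℝ) ≤ p := by linarith
  have key : ∀ u : ℝ, 0 ≤ u → u*(p-1) ≤ 1 → (1+u)^(p-1) ≤ 1 + 4*p*u := by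
    intro u hu hu1
    have h1 : 1 + u ≤ exp u := by linarith [Real.add_one_le_exp u]
    have h2 : (1+u)^(p-1) ≤ (exp u)^(p-1) :=
      Real.rpow_le_rpow (by linarith) h1 (by linarith)
    have h3 : (exp u)^(p-1) = exp (u*(p-1)) := (Real.exp_mul u (p-1)).symm
    have h4 : exp (u*(p-1)) ≤ 1 + 3*(u*(p-1)) :=
      expaux _ (mul_nonneg hu (by linarith)) hu1
    have h5 : 3*(u*(p-1)) ≤ 4*p*u := by nlinarith
    rw [h3] at h2
    linarith
  set k : ℝ → ℝ := fun u => 2*p^2*u^2 + 1 + p*u - (1+u)^p with hk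
  have hderiv : ∀ u : ℝ, HasDerivAt k (4*p^2*u + p - p*(1+u)^(p-1)) u := by
    intro u
    have h1 : HasDerivAt (fun z : ℝ => 1+z) 1 u := (hasDerivAt_id u).const_add 1
    have h2 : HasDerivAt (fun z : ℝ => (1+z)^p) (1 * p * (1+u)^(p-1)) u :=
      h1.rpow_const (Or.inr hp1)
    have h3 : HasDerivAt (fun z : ℝ => 2*p^2*z^2 + 1 + p*z)
        (2*p^2*(2*u) + p) u := by
      have ha : HasDerivAt (fun z : ℝ => z^2) (2*u) u := by
        simpa using hasDerivAt_pow 2 u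
      have hb := ((ha.const_mul (2*p^2)).add_const 1).add ((hasDerivAt_id u).const_mul p)
      simp only [mul_one] at hb
      exact hb
    have := h3.sub h2
    have e : 4*p^2*u + p - p*(1+u)^(p-1) = 2*p^2*(2*u) + p - 1*p*(1+u)^(p-1) := by ring
    rw [e]
    exact this
  have hmono : MonotoneOn k (Set.Icc 0 t) := by
    apply monotoneOn_of_deriv_nonneg (convex_Icc 0 t)
    · exact fun u _ => ((hderiv u).continuousAt).continuousWithinAt
    · exact fun u _ => ((hderiv u).differentiableAt).differentiableWithinAt
    · intro u hu
      rw [interior_Icc] at hu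
      rw [(hderiv u).deriv]
      have hu0 : 0 ≤ u := le_of_lt hu.1
      have hu1 : u*(p-1) ≤ 1 := le_trans (by nlinarith [hu.2.le]) ht1
      have := key u hu0 hu1
      nlinarith [this]
  rcases eq_or_lt_of_le ht0 with rfl | htpos
  · simp [Real.one_rpow]
  · have h0 : k 0 ≤ k t := hmono (Set.left_mem_Icc.mpr ht0) (Set.mem_Icc.mpr ⟨ht0, le_refl t⟩) ht0
    have hk0 : k 0 = 0 := by simp [hk, Real.one_rpow]
    simp only [hk] at h0 hk0
    linarith

lemma scalarU (p t : ℝ) (hp : 2 ≤ p) :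
    |1+t|^p - 1 - p*t ≤ 2*p^2*t^2 + p^p*|t|^p := by
  have hp0 : (0:ℝ) < p := by linarith
  have hpp1 : (1:ℝ) ≤ p^p := by
    calc (1:ℝ) = 1^p := (Real.one_rpow p).symm
      _ ≤ p^p := Real.rpow_le_rpow (by norm_num) (by linarith) (by linarith)
  have htp0 : (0:ℝ) ≤ |t|^p := Real.rpow_nonneg (abs_nonneg t) p
  have hterm : (0:ℝ) ≤ p^p*|t|^p := mul_nonneg (by linarith) htp0
  rcases le_or_gt t (-1) with h | h
  · have ha : |1+t| = -(1+t) := abs_of_nonpos (by linarith)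
    have hb : |t| = -t := abs_of_neg (by linarith)
    have h1 : |1+t|^p ≤ |t|^p :=
      Real.rpow_le_rpow (abs_nonneg _) (by rw [ha, hb]; linarith) (by linarith)
    have h3 : -1 - p*t ≤ 2*p^2*t^2 := by
      nlinarith [mul_nonneg (mul_nonneg hp0.le hp0.le) (sq_nonneg t),
        mul_nonneg (mul_nonneg hp0.le (show (0:ℝ) ≤ -t by linarith)) (show (0:ℝ) ≤ -t-1 by linarith),
        mul_nonneg (mul_nonneg (mul_nonneg hp0.le hp0.le) (show (0:ℝ) ≤ -t by linarith)) (show (0:ℝ) ≤ -t by linarith)]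
    nlinarith [mul_le_mul_of_nonneg_left htp0 (show (0:ℝ) ≤ p^p - 1 by linarith)]
  rcases le_or_gt t 0 with h0 | h0
  · -- -1 < t ≤ 0
    have ha : |1+t| = 1+t := abs_of_nonneg (by linarith)
    set w : ℝ := -2*t - t^2 with hw
    have hw0 : 0 ≤ w := by nlinarith
    have hw1 : w ≤ 1 := by nlinarith [sq_nonneg (1+t)]
    have hsq : (1+t)^p = ((1+t)^2) ^ (p/2) := by rw [sq_rpow_half, ha]
    have hbern : 1 + (p/2)*w ≤ (1+w)^(p/2) :=
      one_add_mul_self_le_rpow_one_add (by linarith) (by linarith)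
    have hle1 : ((1+t)^2*(1+w))^(p/2) ≤ 1 :=
      Real.rpow_le_one (by nlinarith [sq_nonneg (1+t)]) (by nlinarith [sq_nonneg (2*t+t^2)]) (by linarith)
    have hmul : ((1+t)^2) ^ (p/2) * (1+w)^(p/2) = ((1+t)^2*(1+w))^(p/2) :=
      (Real.mul_rpow (sq_nonneg _) (by linarith)).symm
    have hA : (1+t)^p * (1 + (p/2)*w) ≤ 1 := by
      calc (1+t)^p * (1 + (p/2)*w) ≤ (1+t)^p * (1+w)^(p/2) := by
            apply mul_le_mul_of_nonneg_left hbern (Real.rpow_nonneg (by linarith) p)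
        _ = ((1+t)^2*(1+w))^(p/2) := by rw [hsq, hmul]
        _ ≤ 1 := hle1
    have hpoly : (1:ℝ) ≤ (1 + p*t + 2*p^2*t^2) * (1 + (p/2)*w) := by
      have hs0 : 0 ≤ -t := by linarith
      have hs1 : -t ≤ 1 := by linarith
      nlinarith [mul_nonneg (sq_nonneg t) (show (0:ℝ) ≤ p*p - p/2 by nlinarith),
        mul_nonneg (mul_nonneg (sq_nonneg t) hs0) (show (0:ℝ) ≤ p*p/2 by nlinarith),
        mul_nonneg (mul_nonneg (mul_nonneg (sq_nonneg t) hs0) (show (0:ℝ) ≤ p*p*p by positivity)) (show (0:ℝ) ≤ 2+t by linarith)]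
    have hfpos : (0:ℝ) < 1 + (p/2)*w := by nlinarith
    have hB : (1+t)^p ≤ 1 + p*t + 2*p^2*t^2 :=
      le_of_mul_le_mul_right (hA.trans hpoly) hfpos
    rw [ha]
    linarith
  rcases le_or_gt (t*(p-1)) 1 with h1 | h1
  · have hK := lemK p hp t h0.le h1
    rw [abs_of_nonneg (show (0:ℝ) ≤ 1+t by linarith)]
    linarith
  · have hpt : 1+t ≤ p*t := by nlinarith
    have h2 : (1+t)^p ≤ (p*t)^p := Real.rpow_le_rpow (by linarith) hpt (by linarith)
    have h3 : (p*t)^p = p^p * t^p := Real.mul_rpow (by linarith) (by linarith)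
    rw [abs_of_pos h0, abs_of_nonneg (show (0:ℝ) ≤ 1+t by linarith)]
    have h4 : (0:ℝ) ≤ 2*p^2*t^2 := by positivity
    linarith [h2, h3.le, h3.ge]

theorem stmt13 (p x δ : ℝ) (hp : 2 ≤ p) :
    (p / 8) * |x| ^ (p - 2) * δ ^ 2 + (1 / 2 ^ (p + 1)) * |δ| ^ p
      ≤ |x + δ| ^ p - |x| ^ p - p * |x| ^ (p - 2) * x * δ ∧
    |x + δ| ^ p - |x| ^ p - p * |x| ^ (p - 2) * x * δ
      ≤ 2 * p ^ 2 * |x| ^ (p - 2) * δ ^ 2 + p ^ p * |δ| ^ p := by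
  have hp0 : (0:ℝ) < p := by linarith
  by_cases hx : x = 0
  · subst hx
    simp only [abs_zero, zero_add, mul_zero, zero_mul, sub_zero]
    by_cases hp2 : p = 2
    · subst hp2
      have h00 : (0:ℝ)^((2:ℝ)-2) = 1 := by norm_num
      have hd2 : |δ|^(2:ℝ) = δ^2 := by
        rw [show (2:ℝ) = ((2:ℕ):ℝ) by norm_num, Real.rpow_natCast, sq_abs]
      have h23 : (2:ℝ)^((2:ℝ)+1) = 8 := by
        rw [show (2:ℝ)+1 = ((3:ℕ):ℝ) by norm_num, Real.rpow_natCast]; norm_num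
      have h22 : (2:ℝ)^(2:ℝ) = 4 := by
        rw [show (2:ℝ) = ((2:ℕ):ℝ) by norm_num, Real.rpow_natCast]; norm_num
      rw [h00, hd2, h23, h22]
      constructor <;> nlinarith [sq_nonneg δ]
    · have h00 : (0:ℝ)^(p-2) = 0 := Real.zero_rpow (sub_ne_zero.mpr (Ne.symm (fun h => hp2 h.symm)))
      have hz : (0:ℝ)^p = 0 := Real.zero_rpow (by linarith)
      have h1 : (1:ℝ) ≤ 2^(p+1) := by
        calc (1:ℝ) = 2^(0:ℝ) := (Real.rpow_zero 2).symm
          _ ≤ 2^(p+1) := Real.rpow_le_rpow_of_exponent_le (by norm_num) (by linarith)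
      have hpp1 : (1:ℝ) ≤ p^p := by
        calc (1:ℝ) = 1^p := (Real.one_rpow p).symm
          _ ≤ p^p := Real.rpow_le_rpow (by norm_num) (by linarith) (by linarith)
      have hd0 : (0:ℝ) ≤ |δ|^p := Real.rpow_nonneg (abs_nonneg δ) p
      rw [h00, hz]
      have h2pos : (0:ℝ) < 2^(p+1) := Real.rpow_pos_of_pos (by norm_num) (p+1)
      constructor
      · have : (1/2^(p+1)) * |δ|^p ≤ 1 * |δ|^p := by
          apply mul_le_mul_of_nonneg_right _ hd0
          rw [div_le_one h2pos]; linarith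
        nlinarith [sq_nonneg δ]
      · nlinarith [mul_le_mul_of_nonneg_right hpp1 hd0, sq_nonneg δ]
  · -- x ≠ 0
    set t : ℝ := δ/x with htdef
    have hδ : δ = x*t := by rw [htdef]; field_simp
    have hxp : (0:ℝ) < |x| := abs_pos.mpr hx
    have hxppos : (0:ℝ) < |x|^p := Real.rpow_pos_of_pos hxp p
    have habs : |x+δ| = |x| * |1+t| := by
      rw [← abs_mul]; congr 1; rw [hδ]; ring
    have hA : |x+δ|^p = |x|^p * |1+t|^p := by
      rw [habs, Real.mul_rpow (abs_nonneg x) (abs_nonneg _)]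
    have hB : |δ|^p = |x|^p * |t|^p := by
      rw [hδ, abs_mul, Real.mul_rpow (abs_nonneg x) (abs_nonneg t)]
    have hC : |x|^p = |x|^(p-2) * x^2 := by
      rw [show |x|^(p-2) * x^2 = |x|^(p-2) * |x|^(2:ℝ) by
            rw [show (2:ℝ) = ((2:ℕ):ℝ) by norm_num, Real.rpow_natCast, sq_abs],
        ← Real.rpow_add hxp]
      norm_num
    have hxt : x^2*t = x*δ := by rw [hδ]; ring
    have hδ2 : δ^2 = x^2*t^2 := by rw [hδ]; ring
    have hD : |x+δ|^p - |x|^p - p*|x|^(p-2)*x*δ = |x|^p * (|1+t|^p - 1 - p*t) := by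
      rw [hA, hC]; rw [hδ]; ring
    have hE : |x|^(p-2)*δ^2 = |x|^p * t^2 := by
      rw [hC, hδ2]; ring
    have hL1 := scalarL1 p t hp
    have hL2 := scalarL2 p t hp
    have hU := scalarU p t hp
    have h2p : (0:ℝ) < 2^p := Real.rpow_pos_of_pos (by norm_num) p
    have h2p1 : (2:ℝ)^(p+1) = 2^p*2 := by
      rw [Real.rpow_add (by norm_num) p 1, Real.rpow_one]
    have hS0 : (0:ℝ) ≤ |1+t|^p - 1 - p*t := by nlinarith [sq_nonneg t]
    constructor
    · -- lower bound
      have hscalar : (p/8)*t^2 + (1/2^(p+1))*|t|^p ≤ |1+t|^p - 1 - p*t := by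
        have he : (1/2^(p+1))*|t|^p = (|t|^p/2^p)/2 := by
          rw [h2p1]; ring
        rw [he]
        nlinarith [hL1, hL2, hS0]
      have K := mul_le_mul_of_nonneg_left hscalar hxppos.le
      have hE' : p*(|x|^(p-2)*δ^2) = p*(|x|^p*t^2) := by rw [hE]
      have hB' : (1/2^(p+1))*|δ|^p = (1/2^(p+1))*(|x|^p*|t|^p) := by rw [hB]
      rw [hD]
      linarith [K, hE', hB']
    · -- upper bound
      have K := mul_le_mul_of_nonneg_left hU hxppos.le
      have hE'' : p^2*(|x|^(p-2)*δ^2) = p^2*(|x|^p*t^2) := by rw [hE]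
      have hB'' : p^p*|δ|^p = p^p*(|x|^p*|t|^p) := by rw [hB]
      rw [hD]
      linarith [K, hE'', hB'']
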